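/- Let g be a word with a(g)=b(g)=0 and let 𝓕 = {(i₁,j₁),…,(i_k,j_k)} be a complete α-folding of g. Then ν(g) = Σ_{l=1}^k b(w(i_l, j_l)), where w(i,j) is the (cyclic) subword strictly between positions i and j and b counts the β-exponent sum. -/

import Mathlib

/-! Common setup: free group on two generators, Heisenberg group of unipotent
upper-triangular 3×3 integer matrices, the Heisenberg invariant. -/

noncomputable section

open scoped commutatorElement

/-- The free group on two generators. -/
abbrev F : Type := FreeGroup Bool

/-- The generator `α` of the free group. -/
def Wα : F := FreeGroup.of false

/-- The generator `β` of the free group. -/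
def Wβ : F := FreeGroup.of true

/-- `F₃`, the third term of the lower central series `F₁ = F`, `F_{n+1} = [F, Fₙ]`
(Mathlib's `lowerCentralSeries` is 0-indexed). -/
abbrev F₃ : Subgroup F := (⊤ : Subgroup F).lowerCentralSeries 2

/-- `H = F/F₃`. -/
abbrev H : Type := F ⧸ F₃

/-- The unipotent upper-triangular matrix `M(a,b,c)`. -/
def Mmat (a b c : ℤ) : Matrix (Fin 3) (Fin 3) ℤ := !![1, a, c; 0, 1, b; 0, 0, 1]

theorem Mmat_mul (a b c a' b' c' : ℤ) :
    Mmat a b c * Mmat a' b' c' = Mmat (a + a') (b + b') (c + c' + a * b') := by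
  simp [Mmat, Matrix.mul_fin_three]; ring_nf <;> simp

theorem Mmat_zero : Mmat 0 0 0 = 1 := by
  simp [Mmat, Matrix.one_fin_three]

/-- `M(a,b,c)` as a unit of the matrix ring. -/
def Munit (a b c : ℤ) : (Matrix (Fin 3) (Fin 3) ℤ)ˣ :=
  ⟨Mmat a b c, Mmat (-a) (-b) (a * b - c),
    by rw [Mmat_mul]; rw [show a + -a = 0 by ring, show b + -b = 0 by ring,
      show c + (a*b - c) + a * (-b) = 0 by ring]; exact Mmat_zero,
    by rw [Mmat_mul]; rw [show -a + a = 0 by ring, show -b + b = 0 by ring,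
      show (a*b - c) + c + (-a) * b = 0 by ring]; exact Mmat_zero⟩

theorem Munit_mul (a b c a' b' c' : ℤ) :
    Munit a b c * Munit a' b' c' = Munit (a + a') (b + b') (c + c' + a * b') :=
  Units.ext (Mmat_mul a b c a' b' c')

theorem Munit_one : Munit 0 0 0 = 1 := Units.ext Mmat_zero

theorem Munit_inv (a b c : ℤ) : (Munit a b c)⁻¹ = Munit (-a) (-b) (a * b - c) :=
  Units.ext rfl

theorem Munit_congr {a b c a' b' c' : ℤ} (h1 : a = a') (h2 : b = b') (h3 : c = c') :
    Munit a b c = Munit a' b' c' := by subst h1; subst h2; subst h3; rfl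

/-- The integer Heisenberg group, as the subgroup of units of the `3×3` integer
matrix ring consisting of the unipotent upper-triangular matrices `M(a,b,c)`. -/
def Heis : Subgroup (Matrix (Fin 3) (Fin 3) ℤ)ˣ where
  carrier := {x | ∃ a b c : ℤ, x = Munit a b c}
  one_mem' := ⟨0, 0, 0, Munit_one.symm⟩
  mul_mem' := by
    rintro x y ⟨a, b, c, rfl⟩ ⟨a', b', c', rfl⟩
    exact ⟨_, _, _, Munit_mul a b c a' b' c'⟩
  inv_mem' := by
    rintro x ⟨a, b, c, rfl⟩
    exact ⟨_, _, _, Munit_inv a b c⟩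

/-- The homomorphism `Ψ : F → ℍ` with `Ψ(α) = M(1,0,0)` and `Ψ(β) = M(0,1,0)`. -/
def Ψ : F →* (Matrix (Fin 3) (Fin 3) ℤ)ˣ :=
  FreeGroup.lift fun x => if x then Munit 0 1 0 else Munit 1 0 0

theorem Ψ_mem (g : F) : Ψ g ∈ Heis := by
  induction g using FreeGroup.induction_on with
  | C1 => exact Heis.one_mem
  | of x => cases x <;> · show Ψ (FreeGroup.of _) ∈ Heis; rw [Ψ, FreeGroup.lift_apply_of]; exact ⟨_, _, _, rfl⟩
  | inv_of x hx => rw [map_inv]; exact Heis.inv_mem hx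
  | mul x y hx hy => rw [map_mul]; exact Heis.mul_mem hx hy

theorem Munit_commutator (a b c a' b' c' : ℤ) :
    ⁅Munit a b c, Munit a' b' c'⁆ = Munit 0 0 (a * b' - a' * b) := by
  rw [commutatorElement_def, Munit_inv, Munit_inv, Munit_mul, Munit_mul, Munit_mul]
  exact Munit_congr (by ring) (by ring) (by ring)

theorem Munit_central (z a b c : ℤ) : Munit 0 0 z * Munit a b c = Munit a b c * Munit 0 0 z := by
  rw [Munit_mul, Munit_mul]; exact Munit_congr (by ring) (by ring) (by ring)

theorem Heis_comm_central (g : F) (hg : g ∈ (⁅(⊤ : Subgroup F), ⊤⁆ : Subgroup F)) :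
    Ψ g ∈ Subgroup.centralizer (Heis : Set (Matrix (Fin 3) (Fin 3) ℤ)ˣ) := by
  have hle : (⁅(⊤ : Subgroup F), ⊤⁆ : Subgroup F) ≤
      Subgroup.comap Ψ (Subgroup.centralizer (Heis : Set (Matrix (Fin 3) (Fin 3) ℤ)ˣ)) := by
    rw [Subgroup.commutator_le]
    intro g₁ _ g₂ _
    rw [Subgroup.mem_comap, map_commutatorElement]
    obtain ⟨a, b, c, h1⟩ := Ψ_mem g₁
    obtain ⟨a', b', c', h2⟩ := Ψ_mem g₂
    rw [h1, h2, Munit_commutator]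
    rw [Subgroup.mem_centralizer_iff]
    rintro x ⟨p, q, r, rfl⟩
    exact (Munit_central _ _ _ _).symm
  exact hle hg

theorem F₃_le_ker : F₃ ≤ Ψ.ker := by
  show ⁅(⁅(⊤ : Subgroup F), ⊤⁆ : Subgroup F), ⊤⁆ ≤ Ψ.ker
  rw [Subgroup.commutator_le]
  intro g hg h _
  rw [MonoidHom.mem_ker, map_commutatorElement]
  have hc : Ψ h * Ψ g = Ψ g * Ψ h :=
    Subgroup.mem_centralizer_iff.mp (Heis_comm_central g hg) (Ψ h) (Ψ_mem h)
  rw [commutatorElement_def, ← hc]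
  group

/-- The induced homomorphism `ψ : H = F/F₃ → ℍ`. -/
def ψH : H →* Heis :=
  QuotientGroup.lift F₃ (Ψ.codRestrict Heis Ψ_mem)
    (fun g hg => by
      have : Ψ g = 1 := F₃_le_ker hg
      exact Subtype.ext (by simpa using this))

/-- The matrix of the image of `g ∈ H` in the Heisenberg group. -/
def mat (g : H) : Matrix (Fin 3) (Fin 3) ℤ := ((ψH g : (Matrix (Fin 3) (Fin 3) ℤ)ˣ) : Matrix (Fin 3) (Fin 3) ℤ)

/-- `a(g)`: the exponent sum of `α` in `g` (the `(0,1)` entry of the Heisenberg matrix). -/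
def aH (g : H) : ℤ := mat g 0 1

/-- `b(g)`: the exponent sum of `β` in `g` (the `(1,2)` entry of the Heisenberg matrix). -/
def bH (g : H) : ℤ := mat g 1 2

/-- The Heisenberg invariant `ν(g)` of `g ∈ H`: the exponent of the central element
`[α,β]` in the unique normal form `g = [α,β]^ν α^a β^b`. -/
def νH (g : H) : ℤ := mat g 0 2 - aH g * bH g

/-- `a(g)` for a word `g` in the free group. -/
def aF (g : F) : ℤ := aH (QuotientGroup.mk g)

/-- `b(g)` for a word `g` in the free group. -/
def bF (g : F) : ℤ := bH (QuotientGroup.mk g)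

/-- The Heisenberg invariant of a word in the free group: the Heisenberg invariant of its
image in `H = F/F₃`. -/
def νF (g : F) : ℤ := νH (QuotientGroup.mk g)

/-! Words in the letters α, α⁻¹, β, β⁻¹ and foldings (RNA secondary structures). -/

/-- A letter is a pair `(x, s)` (the `FreeGroup` convention): `s = true` for a generator,
`s = false` for its inverse. -/
abbrev Letter : Type := Bool × Bool

/-- A word in the letters `α`, `α⁻¹`, `β`, `β⁻¹`. -/
abbrev Word : Type := List Letter

/-- The letter `α`. -/
def lα : Letter := (false, true)
/-- The letter `α⁻¹`. -/
def lαinv : Letter := (false, false)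
/-- The letter `β`. -/
def lβ : Letter := (true, true)
/-- The letter `β⁻¹`. -/
def lβinv : Letter := (true, false)

/-- The exponent sum of `α` in a word: #`α` − #`α⁻¹`. -/
def aw (w : Word) : ℤ := (w.count lα : ℤ) - (w.count lαinv : ℤ)

/-- The exponent sum of `β` in a word: #`β` − #`β⁻¹`. -/
def bw (w : Word) : ℤ := (w.count lβ : ℤ) - (w.count lβinv : ℤ)

/-- The cyclic subword `w(i,j)` strictly between positions `i` and `j` (`0`-indexed),
read counterclockwise: if `i < j` it is `l_{i+1} ⋯ l_{j-1}`, and if `i > j` it is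
`l_{i+1} ⋯ l_n l_1 ⋯ l_{j-1}` (0-indexed: wraps around the end). -/
def between (w : Word) (i j : ℕ) : Word :=
  if i < j then (w.drop (i + 1)).take (j - i - 1) else w.drop (i + 1) ++ w.take j

/-- A folding (RNA secondary structure without pseudo-knots) of the cyclic word `w`:
a collection of disjoint pairs `(i,j)` of positions with `l_i ∈ {α, β}` and `l_j` the
inverse letter, subject to the non-nesting (no pseudo-knot) condition. -/
structure Folding (w : Word) where
  /-- The set of paired positions. -/
  pairs : Finset (Fin w.length × Fin w.length)
  ne : ∀ p ∈ pairs, p.1 ≠ p.2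
  matched : ∀ p ∈ pairs,
    (w.get p.1 = lα ∧ w.get p.2 = lαinv) ∨ (w.get p.1 = lβ ∧ w.get p.2 = lβinv)
  disjoint : ∀ p ∈ pairs, ∀ q ∈ pairs, p ≠ q →
    p.1 ≠ q.1 ∧ p.1 ≠ q.2 ∧ p.2 ≠ q.1 ∧ p.2 ≠ q.2
  nonnested : ∀ p ∈ pairs, ∀ q ∈ pairs,
    (p.1 < q.1 ∧ q.1 < p.2 → p.1 < q.2 ∧ q.2 < p.2) ∧
    (p.2 < q.1 ∧ q.1 < p.1 → p.2 < q.2 ∧ q.2 < p.1)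

/-- A complete `α`-folding: every pair is an `α`-pair and every occurrence of the
letter `α` is paired. -/
def Folding.IsCompleteAlpha {w : Word} (𝓕 : Folding w) : Prop :=
  (∀ p ∈ 𝓕.pairs, w.get p.1 = lα) ∧
    ∀ i : Fin w.length, w.get i = lα → ∃ p ∈ 𝓕.pairs, p.1 = i

/-! Auxiliary definitions and lemmas for statement 18. -/

/-- α-exponent value of a single letter. -/
def avL (l : Letter) : ℤ := if l = lα then 1 else if l = lαinv then -1 else 0
/-- β-exponent value of a single letter. -/
def bvL (l : Letter) : ℤ := if l = lβ then 1 else if l = lβinv then -1 else 0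

def Aw (w : Word) : ℤ := (w.map avL).sum
def Bw (w : Word) : ℤ := (w.map bvL).sum

def Cw : Word → ℤ
  | [] => 0
  | x :: t => Cw t + avL x * Bw t

theorem Aw_cons (x : Letter) (t : Word) : Aw (x :: t) = avL x + Aw t := by simp [Aw]
theorem Bw_cons (x : Letter) (t : Word) : Bw (x :: t) = bvL x + Bw t := by simp [Bw]
theorem Bw_append (l₁ l₂ : Word) : Bw (l₁ ++ l₂) = Bw l₁ + Bw l₂ := by simp [Bw]

theorem aw_eq_Aw (l : Word) : aw l = Aw l := by
  induction l with
  | nil => simp [aw, Aw]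
  | cons x t ih =>
    rw [Aw_cons, ← ih]
    unfold aw
    rw [List.count_cons, List.count_cons]
    push_cast
    rcases x with ⟨a, b⟩
    cases a <;> cases b <;> simp [avL, lα, lαinv] <;> ring

theorem bw_eq_Bw (l : Word) : bw l = Bw l := by
  induction l with
  | nil => simp [bw, Bw]
  | cons x t ih =>
    rw [Bw_cons, ← ih]
    unfold bw
    rw [List.count_cons, List.count_cons]
    push_cast
    rcases x with ⟨a, b⟩
    cases a <;> cases b <;> simp [bvL, lβ, lβinv] <;> ring

theorem Ψ_single (x : Letter) : Ψ (FreeGroup.mk [x]) = Munit (avL x) (bvL x) 0 := by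
  rcases x with ⟨b, e⟩
  cases e
  · have h : FreeGroup.mk [(b, false)] = (FreeGroup.of b)⁻¹ := by
      rw [show FreeGroup.of b = FreeGroup.mk [(b, true)] from rfl, FreeGroup.inv_mk]
      rfl
    rw [h, map_inv, show Ψ (FreeGroup.of b) = _ from FreeGroup.lift_apply_of]
    cases b <;>
      · simp only [if_true, if_false, Bool.false_eq_true, ite_false, ite_true, Munit_inv]
        exact Munit_congr (by simp [avL, lα, lαinv, lβ, lβinv])
          (by simp [bvL, lα, lαinv, lβ, lβinv]) (by ring)
  · rw [show FreeGroup.mk [(b, true)] = FreeGroup.of b from rfl,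
      show Ψ (FreeGroup.of b) = _ from FreeGroup.lift_apply_of]
    cases b <;>
      · simp only [if_true, if_false, Bool.false_eq_true, ite_false, ite_true]
        exact Munit_congr (by simp [avL, lα, lαinv, lβ, lβinv])
          (by simp [bvL, lα, lαinv, lβ, lβinv]) rfl

theorem Ψ_mk (l : Word) : Ψ (FreeGroup.mk l) = Munit (Aw l) (Bw l) (Cw l) := by
  induction l with
  | nil =>
    rw [show FreeGroup.mk ([] : Word) = 1 from rfl, map_one]
    rw [show Aw [] = 0 from rfl, show Bw [] = 0 from rfl, show Cw [] = 0 from rfl]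
    exact Munit_one.symm
  | cons x t ih =>
    rw [show FreeGroup.mk (x :: t) = FreeGroup.mk [x] * FreeGroup.mk t from
      by rw [FreeGroup.mul_mk]; rfl, map_mul, Ψ_single, ih, Munit_mul]
    exact Munit_congr (by rw [Aw_cons]) (by rw [Bw_cons])
      (by rw [show Cw (x :: t) = Cw t + avL x * Bw t from rfl]; ring)

theorem mat_mk (w : Word) :
    mat (QuotientGroup.mk (FreeGroup.mk w)) = Mmat (Aw w) (Bw w) (Cw w) := by
  have h : (ψH (QuotientGroup.mk (FreeGroup.mk w)) : (Matrix (Fin 3) (Fin 3) ℤ)ˣ)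
      = Ψ (FreeGroup.mk w) := by
    rfl
  rw [mat, h, Ψ_mk]
  rfl

theorem Mmat01 (a b c : ℤ) : Mmat a b c 0 1 = a := by simp [Mmat]
theorem Mmat12 (a b c : ℤ) : Mmat a b c 1 2 = b := by simp [Mmat]
theorem Mmat02 (a b c : ℤ) : Mmat a b c 0 2 = c := by simp [Mmat]

theorem aF_mk (w : Word) : aF (FreeGroup.mk w) = Aw w := by
  rw [aF, aH, mat_mk, Mmat01]
theorem bF_mk (w : Word) : bF (FreeGroup.mk w) = Bw w := by
  rw [bF, bH, mat_mk, Mmat12]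
theorem νF_mk (w : Word) : νF (FreeGroup.mk w) = Cw w - Aw w * Bw w := by
  rw [νF, νH, aH, bH, mat_mk, Mmat01, Mmat12, Mmat02]

theorem Cw_eq_sum (l : Word) :
    Cw l = ∑ i : Fin l.length, avL (l.get i) * Bw (l.drop ((i : ℕ) + 1)) := by
  induction l with
  | nil => simp [Cw]
  | cons x t ih =>
    have hcast : (∑ i : Fin (x :: t).length, avL ((x :: t).get i) * Bw ((x :: t).drop ((i : ℕ) + 1)))
        = ∑ i : Fin (t.length + 1), avL ((x :: t).get i) * Bw ((x :: t).drop ((i : ℕ) + 1)) := rfl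
    rw [hcast, Fin.sum_univ_succ]
    simp only [List.get_cons_zero, Fin.val_succ, Fin.val_zero,
      List.drop_succ_cons, List.drop_zero]
    simp only [show ∀ i : Fin t.length, (x :: t).get i.succ = t.get i from fun i => rfl]
    rw [← ih, show Cw (x :: t) = Cw t + avL x * Bw t from rfl]
    ring

theorem card_filter_eq_count (w : Word) (c : Letter) :
    (Finset.univ.filter (fun i : Fin w.length => w.get i = c)).card = w.count c := by
  conv_rhs => rw [← List.map_get_finRange w]
  rw [List.count_eq_countP, List.countP_map]
  rw [show (Finset.univ.filter (fun i : Fin w.length => w.get i = c)).card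
      = Multiset.card (Multiset.filter (fun i : Fin w.length => w.get i = c)
        (↑(List.finRange w.length))) from by rw [Fin.univ_def]; rfl]
  rw [Multiset.filter_coe, Multiset.coe_card, List.countP_eq_length_filter]
  congr 1
  apply List.filter_congr
  intro x _
  rw [Bool.eq_iff_iff, decide_eq_true_iff]
  simp [Function.comp]

theorem bw_between (w : Word) (hB : Bw w = 0) (i j : ℕ) (_hij : j ≠ i) :
    bw (between w i j) = Bw (w.take j) - Bw (w.take (i + 1)) := by
  rw [bw_eq_Bw]
  unfold between
  split
  case isTrue h =>
    have hj : j = (i + 1) + (j - i - 1) := by omega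
    have : Bw (w.take j) = Bw (w.take (i + 1)) + Bw ((w.drop (i + 1)).take (j - i - 1)) := by
      conv_lhs => rw [hj, List.take_add, Bw_append]
    rw [this]; ring
  case isFalse h =>
    rw [Bw_append]
    have h2 : Bw (w.take (i + 1)) + Bw (w.drop (i + 1)) = Bw w := by
      rw [← Bw_append, List.take_append_drop]
    have h3 : Bw (w.take j) = Bw (w.take j) := rfl
    linarith [hB, h2]


/-- if `g` is a word with `a(g) = b(g) = 0` and `𝓕` is a complete
`α`-folding of `g`, then `ν(g) = Σ_{(i,j) ∈ 𝓕} b(w(i,j))`, where `w(i,j)` is the cyclic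
subword strictly between positions `i` and `j`. -/
theorem statement_18 (w : Word) (ha : aF (FreeGroup.mk w) = 0) (hb : bF (FreeGroup.mk w) = 0)
    (𝓕 : Folding w) (hc : 𝓕.IsCompleteAlpha) :
    νF (FreeGroup.mk w) = ∑ p ∈ 𝓕.pairs, bw (between w (p.1 : ℕ) (p.2 : ℕ)) := by
  have hA0 : Aw w = 0 := by rw [← aF_mk]; exact ha
  have hB0 : Bw w = 0 := by rw [← bF_mk]; exact hb
  set P := 𝓕.pairs with hP
  have hmatch : ∀ p ∈ P, w.get p.1 = lα ∧ w.get p.2 = lαinv := by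
    intro p hp
    have h1 := hc.1 p hp
    rcases 𝓕.matched p hp with ⟨_, h2⟩ | ⟨h2, _⟩
    · exact ⟨h1, h2⟩
    · rw [h1] at h2; exact absurd h2 (by decide)
  set Sa := Finset.univ.filter (fun i : Fin w.length => w.get i = lα) with hSa
  set Sai := Finset.univ.filter (fun i : Fin w.length => w.get i = lαinv) with hSai
  have inj1 : ∀ x ∈ P, ∀ y ∈ P, x.1 = y.1 → x = y := by
    intro x hx y hy hxy
    by_contra hne
    exact (𝓕.disjoint x hx y hy hne).1 hxy
  have inj2 : ∀ x ∈ P, ∀ y ∈ P, x.2 = y.2 → x = y := by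
    intro x hx y hy hxy
    by_contra hne
    exact (𝓕.disjoint x hx y hy hne).2.2.2 hxy
  have himg1 : P.image Prod.fst = Sa := by
    apply Finset.Subset.antisymm
    · intro i hi
      rw [Finset.mem_image] at hi
      obtain ⟨p, hp, rfl⟩ := hi
      rw [hSa, Finset.mem_filter]
      exact ⟨Finset.mem_univ _, (hmatch p hp).1⟩
    · intro i hi
      rw [hSa, Finset.mem_filter] at hi
      obtain ⟨p, hp, hpi⟩ := hc.2 i hi.2
      exact Finset.mem_image.2 ⟨p, hp, hpi⟩
  have hcard1 : P.card = Sa.card := by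
    rw [← himg1, Finset.card_image_of_injOn fun x hx y hy h => inj1 x hx y hy h]
  have hcount : w.count lα = w.count lαinv := by
    have h := aw_eq_Aw w
    rw [hA0] at h
    unfold aw at h
    omega
  have hcard2 : Sai.card = P.card := by
    rw [hcard1, hSa, hSai, card_filter_eq_count, card_filter_eq_count, hcount]
  have himg2 : P.image Prod.snd = Sai := by
    apply Finset.eq_of_subset_of_card_le
    · intro i hi
      rw [Finset.mem_image] at hi
      obtain ⟨p, hp, rfl⟩ := hi
      rw [hSai, Finset.mem_filter]
      exact ⟨Finset.mem_univ _, (hmatch p hp).2⟩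
    · rw [Finset.card_image_of_injOn fun x hx y hy h => inj2 x hx y hy h, hcard2]
  -- Bw of the take at a paired second coordinate: adding one more letter changes nothing
  have htake2 : ∀ p ∈ P, Bw (w.take ((p.2 : ℕ) + 1)) = Bw (w.take (p.2 : ℕ)) := by
    intro p hp
    rw [List.take_succ, Bw_append]
    have : w[(p.2 : ℕ)]? = some (w.get p.2) := by
      rw [List.getElem?_eq_getElem p.2.isLt]
      rfl
    rw [this, (hmatch p hp).2]
    rw [show Bw (Option.some lαinv).toList = bvL lαinv from by simp [Bw]]
    rw [show bvL lαinv = 0 from by decide]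
    ring
  -- Left-hand side
  have key : ∀ i : Fin w.length, avL (w.get i) * Bw (w.drop ((i : ℕ) + 1))
      = (if w.get i = lα then -Bw (w.take ((i : ℕ) + 1)) else 0)
        + (if w.get i = lαinv then Bw (w.take ((i : ℕ) + 1)) else 0) := by
    intro i
    have hd : Bw (w.drop ((i : ℕ) + 1)) = -Bw (w.take ((i : ℕ) + 1)) := by
      have h2 : Bw (w.take ((i : ℕ) + 1)) + Bw (w.drop ((i : ℕ) + 1)) = Bw w := by
        rw [← Bw_append, List.take_append_drop]
      linarith [hB0]
    rw [hd]
    unfold avL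
    split_ifs with h1 h2
    · rw [h1] at h2; exact absurd h2 (by decide)
    · ring
    · ring
    · ring
  have lhs : νF (FreeGroup.mk w)
      = ∑ p ∈ P, (Bw (w.take ((p.2 : ℕ) + 1)) - Bw (w.take ((p.1 : ℕ) + 1))) := by
    rw [νF_mk, hA0, zero_mul, sub_zero, Cw_eq_sum]
    rw [Finset.sum_congr rfl fun i _ => key i, Finset.sum_add_distrib]
    rw [← Finset.sum_filter (fun i : Fin w.length => w.get i = lα)
        (fun i => -Bw (w.take ((i : ℕ) + 1)))]
    rw [← Finset.sum_filter (fun i : Fin w.length => w.get i = lαinv)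
        (fun i => Bw (w.take ((i : ℕ) + 1)))]
    rw [← hSa, ← hSai, ← himg1, ← himg2, Finset.sum_image inj1, Finset.sum_image inj2]
    rw [← Finset.sum_add_distrib]
    exact Finset.sum_congr rfl fun p _ => by ring
  rw [lhs]
  apply Finset.sum_congr rfl
  intro p hp
  have hne : (p.2 : ℕ) ≠ (p.1 : ℕ) := by
    intro h
    exact 𝓕.ne p hp (Fin.ext h).symm
  rw [bw_between w hB0 (p.1 : ℕ) (p.2 : ℕ) hne, htake2 p hp]


end
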